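/- arXiv:2406.08643 — 2 statements merged into one kernel-verified Lean document; each statement's English description precedes it below -/
import Mathlib

section
/- Let O be a Dedekind domain and M a finitely generated torsion-free O-module of rank n. If M ≅ O^{n-1} ⊕ 𝔞 and M ≅ O^{n-1} ⊕ 𝔟 for fractional ideals 𝔞, 𝔟, then 𝔞 and 𝔟 have the same class in the ideal class group of O. -/
open scoped nonZeroDivisors
open Submodule

set_option linter.unusedSectionVars false
set_option maxHeartbeats 1000000
set_option synthInstance.maxHeartbeats 400000

namespace SteinitzAux

variable {O F : Type*} [CommRing O] [IsDomain O] [Field F] [Algebra O F] [IsFractionRing O F]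
variable {ι : Type*} [Fintype ι] [DecidableEq ι]

/-- Set of determinants of matrices whose rows lie in `L`. -/
def detSet (L : Submodule O (ι → F)) : Set F :=
  {x | ∃ M : Matrix ι ι F, (∀ i, M i ∈ L) ∧ M.det = x}

/-- `O`-span of determinants of matrices with rows in `L`. -/
def detSpan (L : Submodule O (ι → F)) : Submodule O F :=
  Submodule.span O (detSet L)

lemma det_rows_comp (g : (ι → F) ≃ₗ[F] (ι → F)) (v : ι → ι → F) :
    (Matrix.of fun i => g (v i)).det =
      LinearMap.det (g : (ι → F) →ₗ[F] (ι → F)) * (Matrix.of v).det := by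
  set A := LinearMap.toMatrix' (g : (ι → F) →ₗ[F] (ι → F)) with hA
  have hg : ∀ x, g x = A.mulVec x := by
    intro x
    conv_lhs => rw [show g x = (g : (ι → F) →ₗ[F] (ι → F)) x from rfl]
    rw [hA, ← Matrix.toLin'_apply, Matrix.toLin'_toMatrix']
  have h : (Matrix.of fun i => g (v i)) = Matrix.of v * A.transpose := by
    ext i j
    simp [hg, Matrix.mulVec, Matrix.mul_apply, dotProduct, mul_comm]
  rw [h, Matrix.det_mul, Matrix.det_transpose, hA, LinearMap.det_toMatrix', mul_comm]

lemma detSpan_map (g : (ι → F) ≃ₗ[F] (ι → F)) (L : Submodule O (ι → F)) :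
    detSpan (L.map ((g.restrictScalars O : (ι → F) ≃ₗ[O] (ι → F)) :
        (ι → F) →ₗ[O] (ι → F))) =
      Submodule.span O {LinearMap.det (g : (ι → F) →ₗ[F] (ι → F))} * detSpan L := by
  set d := LinearMap.det (g : (ι → F) →ₗ[F] (ι → F)) with hd
  apply le_antisymm
  · rw [detSpan, Submodule.span_le]
    rintro x ⟨M, hM, rfl⟩
    choose v hv hgv using hM
    have hM' : M = Matrix.of fun i => g (v i) := by
      ext i j
      rw [Matrix.of_apply]
      exact (congrFun (hgv i) j).symm
    rw [hM', det_rows_comp]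
    exact Submodule.mul_mem_mul (Submodule.mem_span_singleton_self d)
      (Submodule.subset_span ⟨Matrix.of v, hv, rfl⟩)
  · rw [Submodule.mul_le]
    intro m hm y hy
    obtain ⟨c, rfl⟩ := Submodule.mem_span_singleton.mp hm
    rw [smul_mul_assoc]
    refine Submodule.smul_mem _ _ ?_
    have hT : detSpan L ≤ Submodule.comap (LinearMap.mulLeft O d)
        (detSpan (L.map ((g.restrictScalars O : (ι → F) ≃ₗ[O] (ι → F)) :
          (ι → F) →ₗ[O] (ι → F)))) := by
      rw [detSpan, Submodule.span_le]
      rintro x ⟨M, hM, rfl⟩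
      have h1 : M = Matrix.of fun i j => M i j := rfl
      have h2 : d * M.det = (Matrix.of fun i => g (M i)).det := by
        rw [show (Matrix.of fun i => g (M i)).det = d * (Matrix.of M).det from det_rows_comp g M]
        congr 1
      simp only [Submodule.mem_comap, LinearMap.mulLeft_apply, SetLike.mem_coe]
      rw [h2]
      exact Submodule.subset_span ⟨Matrix.of fun i => g (M i),
        fun i => ⟨M i, hM i, rfl⟩, rfl⟩
    exact hT hy



variable {O F : Type*} [CommRing O] [IsDomain O] [Field F] [Algebra O F] [IsFractionRing O F]

/-- The embedding of `O^k × A` into `F^(Fin k ⊕ Unit)`. -/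
def incl (k : ℕ) (A : Submodule O F) : ((Fin k → O) × A) →ₗ[O] (Fin k ⊕ Unit → F) where
  toFun p := Sum.elim (fun i => algebraMap O F (p.1 i)) (fun _ => (p.2 : F))
  map_add' p q := by funext j; rcases j with j | j <;> simp
  map_smul' r p := by funext j; rcases j with j | j <;> simp [Algebra.smul_def]

lemma incl_injective (k : ℕ) (A : Submodule O F) : Function.Injective (incl k A) := by
  intro p q h
  have h1 : ∀ i, algebraMap O F (p.1 i) = algebraMap O F (q.1 i) := fun i =>
    congrFun h (Sum.inl i)
  have h2 : (p.2 : F) = q.2 := congrFun h (Sum.inr ())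
  refine Prod.ext (funext fun i => ?_) (Subtype.ext h2)
  exact IsFractionRing.injective O F (h1 i)

lemma detSpan_range_incl (k : ℕ) (A : Submodule O F) :
    detSpan (LinearMap.range (incl k A)) = A := by
  apply le_antisymm
  · rw [detSpan, Submodule.span_le]
    rintro x ⟨M, hM, rfl⟩
    choose p hp using hM
    rw [Matrix.det_apply]
    refine Submodule.sum_mem _ fun σ _ => ?_
    rw [Units.smul_def]
    refine zsmul_mem ?_ _
    have hprod : ∏ j, M (σ j) j =
        algebraMap O F (∏ i, (p (σ (Sum.inl i))).1 i) * ((p (σ (Sum.inr ()))).2 : F) := by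
      rw [Fintype.prod_sum_type, map_prod]
      congr 1
      · refine Finset.prod_congr rfl fun i _ => ?_
        rw [← hp (σ (Sum.inl i))]; rfl
      · rw [Fintype.prod_unique]
        rw [← hp (σ (Sum.inr ()))]; rfl
    rw [hprod, ← Algebra.smul_def]
    exact Submodule.smul_mem _ _ (SetLike.coe_mem _)
  · intro a ha
    apply Submodule.subset_span
    refine ⟨Matrix.diagonal (Sum.elim (fun _ => 1) (fun _ => a)), ?_, ?_⟩
    · rintro (i | u)
      · refine ⟨(Pi.single i 1, 0), ?_⟩
        funext j
        rcases j with j | j <;>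
          simp [incl, Matrix.diagonal, Pi.single_apply, eq_comm]
      · refine ⟨(0, ⟨a, ha⟩), ?_⟩
        funext j
        rcases j with j | j <;> simp [incl, Matrix.diagonal]
    · rw [Matrix.det_diagonal, Fintype.prod_sum_type]
      simp

lemma span_range_incl (k : ℕ) {A : Submodule O F} (hA : A ≠ ⊥) :
    Submodule.span F ((LinearMap.range (incl k A) :
        Submodule O (Fin k ⊕ Unit → F)) : Set (Fin k ⊕ Unit → F)) = ⊤ := by
  obtain ⟨a, haA, ha0⟩ := Submodule.exists_mem_ne_zero_of_ne_bot hA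
  rw [eq_top_iff, ← (Pi.basisFun F (Fin k ⊕ Unit)).span_eq, Submodule.span_le]
  rintro _ ⟨j, rfl⟩
  rcases j with i | u
  · apply Submodule.subset_span
    refine ⟨(Pi.single i 1, 0), ?_⟩
    funext j
    rcases j with j | j <;>
      simp [incl, Pi.basisFun_apply, Pi.single_apply, eq_comm]
  · have h1 : Pi.basisFun F (Fin k ⊕ Unit) (Sum.inr u) = a⁻¹ • incl k A (0, ⟨a, haA⟩) := by
      funext j
      rcases j with j | j <;>
        simp [incl, Pi.basisFun_apply, Pi.single_apply, inv_mul_cancel₀ ha0]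
    rw [h1]
    exact Submodule.smul_mem _ _ (Submodule.subset_span ⟨(0, ⟨a, haA⟩), rfl⟩)




lemma exists_linearEquiv_map_eq (L L' : Submodule O (ι → F))
    (hL : Submodule.span F (L : Set (ι → F)) = ⊤)
    (hL' : Submodule.span F (L' : Set (ι → F)) = ⊤)
    (e : L ≃ₗ[O] L') :
    ∃ g : (ι → F) ≃ₗ[F] (ι → F),
      L.map ((g.restrictScalars O : (ι → F) ≃ₗ[O] (ι → F)) : (ι → F) →ₗ[O] (ι → F)) = L' := by
  classical
  obtain ⟨s, hsub, hsp, hli⟩ := exists_linearIndependent F (L : Set (ι → F))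
  have hsp' : ⊤ ≤ Submodule.span F (Set.range ((↑) : s → (ι → F))) := by
    rw [Subtype.range_coe, hsp, hL]
  let b : Module.Basis s F (ι → F) := Module.Basis.mk hli hsp'
  let g0 : (ι → F) →ₗ[F] (ι → F) := b.constr F (fun i => (e ⟨i.1, hsub i.2⟩ : ι → F))
  have hb : ∀ i : s, (b i : ι → F) = i.1 := fun i => Module.Basis.mk_apply hli hsp' i
  have hg0 : ∀ i : s, g0 (b i) = (e ⟨i.1, hsub i.2⟩ : ι → F) := fun i =>
    Module.Basis.constr_basis b F _ i
  -- key : g0 agrees with e on L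
  have key : ∀ x (hx : x ∈ L), g0 x = (e ⟨x, hx⟩ : ι → F) := by
    intro x hx
    obtain ⟨q, hq⟩ := IsLocalization.exist_integer_multiples O⁰ (b.repr x).support (b.repr x)
    choose dc hdc using hq
    have hx' : ∑ i ∈ (b.repr x).support, (b.repr x) i • b i = x := by
      conv_rhs => rw [← b.linearCombination_repr x]
      rw [Finsupp.linearCombination_apply, Finsupp.sum]
    have h1 : (q : O) • x = ∑ i ∈ (b.repr x).support.attach, dc i.1 i.2 • (b i.1) := by
      have e1 : (q : O) • x = ∑ i ∈ (b.repr x).support, ((q : O) • (b.repr x) i) • b i := by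
        conv_lhs => rw [← hx']
        rw [Finset.smul_sum]
        exact Finset.sum_congr rfl fun i _ => (smul_assoc _ _ _).symm
      rw [e1, ← Finset.sum_attach (b.repr x).support
        (fun i => ((q : O) • (b.repr x) i) • b i)]
      refine Finset.sum_congr rfl fun i _ => ?_
      rw [← algebraMap_smul F (dc i.1 i.2) (b i.1), hdc i.1 i.2]
    -- apply g0
    have h2 : g0 ((q : O) • x) =
        ∑ i ∈ (b.repr x).support.attach, dc i.1 i.2 • (e ⟨i.1.1, hsub i.1.2⟩ : ι → F) := by
      rw [h1, map_sum]
      refine Finset.sum_congr rfl fun i _ => ?_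
      rw [LinearMap.map_smul_of_tower, hg0]
    -- the element z of L
    set z : L := ∑ i ∈ (b.repr x).support.attach, dc i.1 i.2 • (⟨i.1.1, hsub i.1.2⟩ : L) with hz
    have hzval : (z : ι → F) = (q : O) • x := by
      rw [hz, h1, Submodule.coe_sum]
      refine Finset.sum_congr rfl fun i _ => ?_
      rw [SetLike.val_smul, hb]
    have h3 : ((e z : L') : ι → F) =
        ∑ i ∈ (b.repr x).support.attach, dc i.1 i.2 • (e ⟨i.1.1, hsub i.1.2⟩ : ι → F) := by
      rw [hz, map_sum, Submodule.coe_sum]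
      refine Finset.sum_congr rfl fun i _ => ?_
      rw [map_smul, SetLike.val_smul]
    have h4 : z = (q : O) • (⟨x, hx⟩ : L) := by
      apply Subtype.ext
      rw [hzval]
      rfl
    have h5 : g0 ((q : O) • x) = (q : O) • (e ⟨x, hx⟩ : ι → F) := by
      rw [h2, ← h3, h4, map_smul]
      rfl
    have hQ : algebraMap O F (q : O) ≠ 0 :=
      IsFractionRing.to_map_ne_zero_of_mem_nonZeroDivisors q.2
    have h6 : algebraMap O F (q : O) • g0 x = algebraMap O F (q : O) • (e ⟨x, hx⟩ : ι → F) := by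
      rw [algebraMap_smul, algebraMap_smul, ← LinearMap.map_smul_of_tower, h5]
    exact smul_right_injective (ι → F) hQ h6
  -- g0 is bijective
  have hsurjL' : ∀ y ∈ L', ∃ x ∈ L, g0 x = y := by
    intro y hy
    refine ⟨(e.symm ⟨y, hy⟩ : ι → F), (e.symm ⟨y, hy⟩).2, ?_⟩
    rw [key _ (e.symm ⟨y, hy⟩).2]
    have : (⟨(e.symm ⟨y, hy⟩ : ι → F), (e.symm ⟨y, hy⟩).2⟩ : L) = e.symm ⟨y, hy⟩ :=
      Subtype.ext rfl
    rw [this, e.apply_symm_apply]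
  have hsurj : Function.Surjective g0 := by
    rw [← LinearMap.range_eq_top, eq_top_iff, ← hL', Submodule.span_le]
    intro y hy
    obtain ⟨x, _, hgx⟩ := hsurjL' y hy
    exact ⟨x, hgx⟩
  have hinj : Function.Injective g0 := (LinearMap.injective_iff_surjective).mpr hsurj
  refine ⟨LinearEquiv.ofBijective g0 ⟨hinj, hsurj⟩, ?_⟩
  apply le_antisymm
  · rintro _ ⟨x, hx, rfl⟩
    have : ((LinearEquiv.ofBijective g0 ⟨hinj, hsurj⟩).restrictScalars O :
        (ι → F) →ₗ[O] (ι → F)) x = g0 x := rfl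
    rw [this, key x hx]
    exact SetLike.coe_mem _
  · intro y hy
    obtain ⟨x, hxL, hgx⟩ := hsurjL' y hy
    exact ⟨x, hxL, hgx⟩


end SteinitzAux


/-- Well-definedness of the Steinitz class: if a finitely generated torsion-free module `M`
of rank `n` over a Dedekind domain `O` satisfies `M ≃ O^(n-1) ⊕ 𝔞` and `M ≃ O^(n-1) ⊕ 𝔟`
for nonzero fractional ideals `𝔞, 𝔟`, then `𝔞` and `𝔟` have the same ideal class. -/
theorem steinitz_class_well_defined (O F : Type*) [CommRing O] [IsDomain O] [IsDedekindDomain O]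
    [Field F] [Algebra O F] [IsFractionRing O F] (n : ℕ)
    (M : Type*) [AddCommGroup M] [Module O M] [Module.Finite O M] [NoZeroSMulDivisors O M]
    (hrank : Module.finrank O M = n)
    (a b : (FractionalIdeal (nonZeroDivisors O) F)ˣ)
    (ha : Nonempty (M ≃ₗ[O] ((Fin (n - 1) → O) × ((a : FractionalIdeal (nonZeroDivisors O) F) : Submodule O F))))
    (hb : Nonempty (M ≃ₗ[O] ((Fin (n - 1) → O) × ((b : FractionalIdeal (nonZeroDivisors O) F) : Submodule O F)))) :
    ClassGroup.mk F a = ClassGroup.mk F b := by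
  classical
  set k := n - 1 with hk
  set 𝔞 : Submodule O F := ((a : FractionalIdeal (nonZeroDivisors O) F) : Submodule O F) with h𝔞
  set 𝔟 : Submodule O F := ((b : FractionalIdeal (nonZeroDivisors O) F) : Submodule O F) with h𝔟
  have ha0 : 𝔞 ≠ ⊥ := by
    rw [h𝔞, Ne, FractionalIdeal.coeToSubmodule_eq_bot]
    exact a.ne_zero
  have hb0 : 𝔟 ≠ ⊥ := by
    rw [h𝔟, Ne, FractionalIdeal.coeToSubmodule_eq_bot]
    exact b.ne_zero
  -- the linear equivalence between the two lattices
  let e : (LinearMap.range (SteinitzAux.incl k 𝔞) : Submodule O (Fin k ⊕ Unit → F)) ≃ₗ[O]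
      (LinearMap.range (SteinitzAux.incl k 𝔟) : Submodule O (Fin k ⊕ Unit → F)) :=
    (((LinearEquiv.ofInjective _ (SteinitzAux.incl_injective k 𝔞)).symm.trans
      (ha.some.symm.trans hb.some)).trans
      (LinearEquiv.ofInjective _ (SteinitzAux.incl_injective k 𝔟)))
  obtain ⟨g, hg⟩ := SteinitzAux.exists_linearEquiv_map_eq _ _
    (SteinitzAux.span_range_incl k ha0) (SteinitzAux.span_range_incl k hb0) e
  have hdet := SteinitzAux.detSpan_map g (LinearMap.range (SteinitzAux.incl k 𝔞))
  rw [hg, SteinitzAux.detSpan_range_incl, SteinitzAux.detSpan_range_incl] at hdet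
  set d := LinearMap.det (g : (Fin k ⊕ Unit → F) →ₗ[F] (Fin k ⊕ Unit → F)) with hdd
  have hd : d ≠ 0 := (LinearEquiv.isUnit_det' g).ne_zero
  have hfrac : FractionalIdeal.spanSingleton (nonZeroDivisors O) d *
      (a : FractionalIdeal (nonZeroDivisors O) F) = (b : FractionalIdeal (nonZeroDivisors O) F) := by
    apply FractionalIdeal.coeToSubmodule_injective
    beta_reduce
    rw [FractionalIdeal.coe_mul, FractionalIdeal.coe_spanSingleton, ← h𝔞, ← h𝔟, hdet]
  have hu : toPrincipalIdeal O F (Units.mk0 d hd) * a = b := by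
    apply Units.ext
    rw [Units.val_mul, coe_toPrincipalIdeal]
    exact hfrac
  have hP : ClassGroup.mk F (toPrincipalIdeal O F (Units.mk0 d hd)) = 1 := by
    rw [ClassGroup.mk_eq_one_iff]
    refine ⟨⟨d, ?_⟩⟩
    rw [coe_toPrincipalIdeal, FractionalIdeal.coe_spanSingleton]
    rfl
  rw [← hu, map_mul, hP, one_mul]
end

section
/- Let γ ∈ O_K generate a principal prime ideal coprime to (n(n-1)), where n ≥ 2. Then the polynomial R(x) = x^n − γ^{n−1} x + γ is Eisenstein at any prime above (γ) in the field L = K(ζ_{n−1}, n^{1/(n−1)}), and in particular R is irreducible over L. -/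
open NumberField Polynomial IntermediateField

set_option maxHeartbeats 2000000
set_option synthInstance.maxHeartbeats 200000

section Aux

/-- Generic step: if `P` divides the different ideal of an AKLB extension generated by `x`,
then `F'(x) ∈ P` for any polynomial `F` over `A` vanishing at `x`. -/
lemma diff_step (A K L B : Type*) [CommRing A] [Field K] [CommRing B] [Field L]
    [Algebra A K] [Algebra B L] [Algebra A B] [Algebra K L] [Algebra A L]
    [IsScalarTower A K L] [IsScalarTower A B L]
    [IsDomain A] [IsFractionRing A K] [FiniteDimensional K L]
    [IsIntegralClosure B A L] [Algebra.IsSeparable K L]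
    [IsIntegrallyClosed A] [IsDedekindDomain B]
    [Module.IsTorsionFree A B]
    (x : B) (hx : Algebra.adjoin K {algebraMap B L x} = ⊤)
    (F : A[X]) (hF : aeval x F = 0)
    (P : Ideal B) (hP : P ∣ differentIdeal A B) :
    aeval x (derivative F) ∈ P := by
  have hint : IsIntegral A x := IsIntegralClosure.isIntegral A L x
  obtain ⟨h, hFh⟩ := minpoly.isIntegrallyClosed_dvd hint hF
  have h1 : differentIdeal A B ∣ Ideal.span {aeval x (derivative (minpoly A x))} := by
    rw [Ideal.dvd_iff_le, ← conductor_mul_differentIdeal A K L x hx]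
    exact Ideal.mul_le_right
  have h2 : aeval x (derivative (minpoly A x)) ∈ P :=
    Ideal.dvd_iff_le.mp (dvd_trans hP h1) (Ideal.mem_span_singleton_self _)
  rw [hFh, Polynomial.derivative_mul, map_add, map_mul, map_mul, minpoly.aeval, zero_mul,
    add_zero]
  exact Ideal.mul_mem_right _ _ h2

/-- The key unramifiedness statement: `γ ∉ Q ^ 2`. -/
lemma gamma_not_mem_sq (K L : Type*) [Field K] [NumberField K] [Field L] [NumberField L]
    [Algebra K L] (n : ℕ) (hn : 2 ≤ n) (γ : 𝓞 K)
    (hprime : Prime (Ideal.span {γ} : Ideal (𝓞 K)))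
    (hcop : IsCoprime (Ideal.span {γ} : Ideal (𝓞 K))
      (Ideal.span {((n : 𝓞 K) * ((n : 𝓞 K) - 1))}))
    (ζ μ : L) (hζ : IsPrimitiveRoot ζ (n - 1)) (hμ : μ ^ (n - 1) = (n : L))
    (hL : Algebra.adjoin K ({ζ, μ} : Set L) = ⊤)
    (Q : Ideal (𝓞 L)) (hQ : Q.IsPrime)
    (hQγ : Q.comap (algebraMap (𝓞 K) (𝓞 L)) = Ideal.span {γ}) :
    algebraMap (𝓞 K) (𝓞 L) γ ∉ Q ^ 2 := by
  intro hsq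
  -- basic facts
  have hγ0 : γ ≠ 0 := by
    rintro rfl
    exact hprime.ne_zero (by simp [Ideal.zero_eq_bot])
  have hpbot : (Ideal.span {γ} : Ideal (𝓞 K)) ≠ ⊥ := by
    simpa [Ideal.span_singleton_eq_bot] using hγ0
  have hptop : (Ideal.span {γ} : Ideal (𝓞 K)) ≠ ⊤ := by
    intro h
    exact hprime.not_unit (by rw [Ideal.isUnit_iff]; exact h)
  have hmuln : ((n : 𝓞 K) * ((n : 𝓞 K) - 1)) ∉ Ideal.span {γ} := by
    intro hmem
    apply hptop
    have hle : Ideal.span {((n : 𝓞 K) * ((n : 𝓞 K) - 1))} ≤ Ideal.span {γ} := by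
      rwa [Ideal.span_singleton_le_iff_mem]
    have := Ideal.isCoprime_iff_sup_eq.mp hcop
    rw [sup_eq_left.mpr hle] at this
    exact this
  have hnmem : (n : 𝓞 K) ∉ Ideal.span {γ} := fun h => hmuln (Ideal.mul_mem_right _ _ h)
  have hn1mem : ((n : 𝓞 K) - 1) ∉ Ideal.span {γ} := fun h => hmuln (Ideal.mul_mem_left _ _ h)
  have hn1 : n - 1 ≠ 0 := by omega
  -- the intermediate field M = K(ζ)
  set M : IntermediateField K L := K⟮ζ⟯ with hM
  have hζpow : ζ ^ (n - 1) = 1 := hζ.pow_eq_one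
  have hζKint : IsIntegral K ζ :=
    ⟨X ^ (n - 1) - 1, monic_X_pow_sub_C _ hn1, by simp [hζpow]⟩
  let ζM : M := IntermediateField.AdjoinSimple.gen K ζ
  have hζMcoe : (algebraMap M L) ζM = ζ := IntermediateField.AdjoinSimple.algebraMap_gen K ζ
  have hζMpow : ζM ^ (n - 1) = 1 := by
    apply (algebraMap M L).injective
    rw [map_pow, map_one, hζMcoe, hζpow]
  have hζMint : IsIntegral ℤ ζM :=
    ⟨X ^ (n - 1) - 1, monic_X_pow_sub_C _ hn1, by simp [hζMpow]⟩
  let ζO : 𝓞 M := ⟨ζM, hζMint⟩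
  have hζOcoe : algebraMap (𝓞 M) M ζO = ζM := RingOfIntegers.map_mk _ _
  have hζOpow : ζO ^ (n - 1) = 1 := by
    apply RingOfIntegers.coe_injective
    rw [map_pow, map_one, hζOcoe, hζMpow]
  -- μ as an algebraic integer
  have hμint : IsIntegral ℤ μ :=
    ⟨X ^ (n - 1) - C (n : ℤ), monic_X_pow_sub_C _ hn1, by simp [hμ]⟩
  let μO : 𝓞 L := ⟨μ, hμint⟩
  have hμOcoe : algebraMap (𝓞 L) L μO = μ := RingOfIntegers.map_mk _ _
  have hμOpow : μO ^ (n - 1) = (n : 𝓞 L) := by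
    apply RingOfIntegers.coe_injective
    rw [map_pow, map_natCast, hμOcoe, hμ]
  -- primes
  have hQbot : Q ≠ ⊥ := by
    rintro rfl
    apply hpbot
    rw [← hQγ, ← RingHom.ker_eq_comap_bot, RingOfIntegers.ker_algebraMap_eq_bot]
  set P : Ideal (𝓞 M) := Q.comap (algebraMap (𝓞 M) (𝓞 L)) with hP
  have hPprime : P.IsPrime := Ideal.comap_isPrime _ Q
  have hPK : P.comap (algebraMap (𝓞 K) (𝓞 M)) = Ideal.span {γ} := by
    rw [hP, Ideal.comap_comap, ← IsScalarTower.algebraMap_eq, hQγ]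
  have hPbot : P ≠ ⊥ := by
    intro h
    apply hpbot
    rw [← hPK, h, ← RingHom.ker_eq_comap_bot, RingOfIntegers.ker_algebraMap_eq_bot]
  have hQprime' : Prime Q := Ideal.prime_of_isPrime hQbot hQ
  -- membership facts transported through comaps
  have hγQ : algebraMap (𝓞 K) (𝓞 L) γ ∈ Q := by
    have : γ ∈ Q.comap (algebraMap (𝓞 K) (𝓞 L)) := by
      rw [hQγ]; exact Ideal.mem_span_singleton_self _
    exact this
  have hb : algebraMap (𝓞 K) (𝓞 M) γ ∈ P := by
    rw [hP, Ideal.mem_comap, ← IsScalarTower.algebraMap_apply]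
    exact hγQ
  -- elements (n-1) and n are units at P and Q
  have hn1P : ((n : 𝓞 M) - 1) ∉ P := by
    intro h
    apply hn1mem
    rw [← hPK, Ideal.mem_comap]
    convert h using 1
    push_cast
    ring
  have hn1Q : ((n : 𝓞 L) - 1) ∉ Q := by
    intro h
    apply hn1mem
    rw [← hQγ, Ideal.mem_comap]
    convert h using 1
    push_cast
    ring
  have hnQ : (n : 𝓞 L) ∉ Q := by
    intro h
    apply hnmem
    rw [← hQγ, Ideal.mem_comap]
    convert h using 1
    push_cast
    ring
  -- P is maximal, span γ is maximal
  haveI hspan_max : (Ideal.span {γ} : Ideal (𝓞 K)).IsMaximal :=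
    (Ideal.isPrime_of_prime hprime).isMaximal hpbot
  haveI hPmax : P.IsMaximal := hPprime.isMaximal hPbot
  -- natCast coefficients
  have hcastM : ((n - 1 : ℕ) : 𝓞 M) = (n : 𝓞 M) - 1 := by
    push_cast [Nat.cast_sub (by omega : 1 ≤ n)]
    ring
  have hcastL : ((n - 1 : ℕ) : 𝓞 L) = (n : 𝓞 L) - 1 := by
    push_cast [Nat.cast_sub (by omega : 1 ≤ n)]
    ring
  by_cases hb2 : algebraMap (𝓞 K) (𝓞 M) γ ∈ P ^ 2
  · -- ramification already happens in M/K; contradiction with the different of M/K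
    have hdvd : P ^ 2 ∣ (Ideal.span {γ}).map (algebraMap (𝓞 K) (𝓞 M)) := by
      rw [Ideal.dvd_iff_le, Ideal.map_span, Set.image_singleton,
        Ideal.span_singleton_le_iff_mem]
      exact hb2
    have hPdiff : P ∣ differentIdeal (𝓞 K) (𝓞 M) := by
      have := pow_sub_one_dvd_differentIdeal (𝓞 K) P 2 hpbot hdvd
      simpa using this
    -- apply the generic step with x = ζ, F = X^(n-1) - 1
    have hadj : Algebra.adjoin K {(algebraMap (𝓞 M) M) ζO} = ⊤ := by
      rw [hζOcoe]
      apply Subalgebra.map_injective (f := M.val) (Subtype.val_injective)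
      rw [AlgHom.map_adjoin, Set.image_singleton, Algebra.map_top]
      have h1 : M.val ζM = ζ := rfl
      rw [h1, M.range_val]
      exact (IntermediateField.adjoin_simple_toSubalgebra_of_isAlgebraic hζKint.isAlgebraic).symm
    have hstep := diff_step (𝓞 K) K M (𝓞 M) ζO hadj (X ^ (n - 1) - 1)
      (by
        rw [map_sub, map_one, map_pow, aeval_X, hζOpow, sub_self]) P hPdiff
    rw [derivative_sub, derivative_one, sub_zero, derivative_X_pow, map_mul, map_pow, aeval_X,
      aeval_C] at hstep
    have : (algebraMap (𝓞 K) (𝓞 M)) ((n - 1 : ℕ) : 𝓞 K) * ζO ^ (n - 1 - 1) ∈ P := hstep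
    rcases hPprime.mem_or_mem this with h | h
    · rw [map_natCast, hcastM] at h
      exact hn1P h
    · have h1 : ζO ^ (n - 1) ∈ P := by
        have : ζO ^ (n - 1) = ζO ^ (n - 1 - 1) * ζO := by
          rw [← pow_succ]
          congr 1
          omega
        rw [this]
        exact Ideal.mul_mem_right _ _ h
      rw [hζOpow] at h1
      exact hPprime.ne_top ((Ideal.eq_top_iff_one _).mpr h1)
  · -- ramification happens in L/M; contradiction with the different of L/M
    obtain ⟨I, hI⟩ : P ∣ Ideal.span {algebraMap (𝓞 K) (𝓞 M) γ} :=
      Ideal.dvd_iff_le.mpr ((Ideal.span_singleton_le_iff_mem _).mpr hb)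
    have hQI : ¬ Q ∣ I.map (algebraMap (𝓞 M) (𝓞 L)) := by
      intro hdvd
      apply hb2
      have hIP : I ≤ P := by
        refine le_trans (Ideal.le_comap_map (f := algebraMap (𝓞 M) (𝓞 L))) ?_
        exact Ideal.comap_mono (Ideal.dvd_iff_le.mp hdvd)
      have : P ^ 2 ∣ Ideal.span {algebraMap (𝓞 K) (𝓞 M) γ} := by
        rw [hI, pow_two]
        exact mul_dvd_mul_left P (Ideal.dvd_iff_le.mpr hIP)
      exact (Ideal.span_singleton_le_iff_mem _).mp (Ideal.dvd_iff_le.mp this)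
    have h2 : Q ^ 2 ∣ (Ideal.span {algebraMap (𝓞 K) (𝓞 M) γ}).map (algebraMap (𝓞 M) (𝓞 L)) := by
      rw [Ideal.map_span, Set.image_singleton, Ideal.dvd_iff_le,
        Ideal.span_singleton_le_iff_mem, ← IsScalarTower.algebraMap_apply]
      exact hsq
    rw [hI, Ideal.map_mul] at h2
    have hQ2P : Q ^ 2 ∣ P.map (algebraMap (𝓞 M) (𝓞 L)) :=
      hQprime'.pow_dvd_of_dvd_mul_right 2 hQI h2
    have hQdiff : Q ∣ differentIdeal (𝓞 M) (𝓞 L) := by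
      have := pow_sub_one_dvd_differentIdeal (𝓞 M) Q 2 hPbot hQ2P
      simpa using this
    -- apply the generic step with x = μ, F = X^(n-1) - n
    have hadj : Algebra.adjoin M {(algebraMap (𝓞 L) L) μO} = ⊤ := by
      rw [hμOcoe, eq_top_iff]
      intro x _
      have hle : Algebra.adjoin K ({ζ, μ} : Set L) ≤
          (Algebra.adjoin M {μ}).restrictScalars K := by
        apply Algebra.adjoin_le
        rintro y hy
        rcases Set.mem_insert_iff.mp hy with h | h
        · rw [h, ← hζMcoe]
          exact (Subalgebra.mem_restrictScalars K).mpr (Subalgebra.algebraMap_mem _ ζM)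
        · rw [Set.mem_singleton_iff.mp h]
          exact Algebra.subset_adjoin rfl
      have : x ∈ (Algebra.adjoin M {μ}).restrictScalars K := by
        rw [hL] at hle
        exact hle trivial
      exact this
    have hstep := diff_step (𝓞 M) M L (𝓞 L) μO hadj (X ^ (n - 1) - C ((n : ℕ) : 𝓞 M))
      (by
        rw [map_sub, aeval_C, map_pow, aeval_X, hμOpow, map_natCast, sub_self]) Q hQdiff
    rw [derivative_sub, derivative_C, sub_zero, derivative_X_pow, map_mul, map_pow, aeval_X,
      aeval_C] at hstep
    rcases hQ.mem_or_mem hstep with h | h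
    · rw [map_natCast, hcastL] at h
      exact hn1Q h
    · have h1 : μO ^ (n - 1) ∈ Q := by
        have : μO ^ (n - 1) = μO ^ (n - 1 - 1) * μO := by
          rw [← pow_succ]
          congr 1
          omega
        rw [this]
        exact Ideal.mul_mem_right _ _ h
      rw [hμOpow] at h1
      exact hnQ h1

end Aux

/-- If `γ ∈ 𝓞 K` generates a principal prime ideal coprime to `(n(n-1))` (`n ≥ 2`),
then `R(x) = x^n − γ^(n−1) x + γ` is Eisenstein at every prime of
`L = K(ζ_(n−1), n^(1/(n−1)))` lying above `(γ)`, and in particular `R` is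
irreducible over `L`. -/
theorem eisenstein_above_gamma (K L : Type*) [Field K] [NumberField K] [Field L] [NumberField L]
    [Algebra K L] (n : ℕ) (hn : 2 ≤ n) (γ : 𝓞 K)
    (hprime : Prime (Ideal.span {γ} : Ideal (𝓞 K)))
    (hcop : IsCoprime (Ideal.span {γ} : Ideal (𝓞 K))
      (Ideal.span {((n : 𝓞 K) * ((n : 𝓞 K) - 1))}))
    (ζ μ : L) (hζ : IsPrimitiveRoot ζ (n - 1)) (hμ : μ ^ (n - 1) = (n : L))
    (hL : Algebra.adjoin K ({ζ, μ} : Set L) = ⊤) :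
    (∀ Q : Ideal (𝓞 L), Q.IsPrime →
        Q.comap (algebraMap (𝓞 K) (𝓞 L)) = Ideal.span {γ} →
        ((X ^ n - C (γ ^ (n - 1)) * X + C γ : Polynomial (𝓞 K)).map
          (algebraMap (𝓞 K) (𝓞 L))).IsEisensteinAt Q) ∧
      Irreducible
        (X ^ n - C ((algebraMap K L (γ : K)) ^ (n - 1)) * X + C (algebraMap K L (γ : K)) :
          Polynomial L) := by
  have hn1 : n - 1 ≠ 0 := by omega
  set p0 : Polynomial (𝓞 K) := X ^ n - C (γ ^ (n - 1)) * X + C γ with hp0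
  have hp0eq : p0 = X ^ n + (C (-(γ ^ (n - 1))) * X + C γ) := by
    rw [hp0, map_neg]
    ring
  have hdegq : (C (-(γ ^ (n - 1))) * X + C γ : Polynomial (𝓞 K)).degree <
      (X ^ n : Polynomial (𝓞 K)).degree := by
    rw [degree_X_pow]
    exact lt_of_le_of_lt degree_linear_le (by exact_mod_cast (by omega : 1 < n))
  have hmonic : p0.Monic := by
    rw [hp0eq]
    apply monic_X_pow_add
    rwa [degree_X_pow] at hdegq
  have hdeg : p0.natDegree = n := by
    have h : p0.degree = n := by
      rw [hp0eq, degree_add_eq_left_of_degree_lt hdegq, degree_X_pow]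
    exact natDegree_eq_of_degree_eq_some h
  have hc0 : p0.coeff 0 = γ := by
    have h0 : ¬ (0 = n) := by omega
    rw [hp0]
    simp only [coeff_add, coeff_sub, coeff_X_pow, coeff_C_mul, coeff_X_zero, coeff_C, if_neg h0,
      mul_zero, if_pos rfl, zero_sub, neg_zero, zero_add, ite_true, eq_self_iff_true]
  have hc1 : p0.coeff 1 = -(γ ^ (n - 1)) := by
    have h0 : ¬ (1 = n) := by omega
    rw [hp0]
    simp only [coeff_add, coeff_sub, coeff_X_pow, coeff_C_mul, coeff_X_one, coeff_C, if_neg h0,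
      mul_one, if_neg (one_ne_zero), zero_sub, add_zero]
  have hck : ∀ i, i ≠ 0 → i ≠ 1 → i ≠ n → p0.coeff i = 0 := by
    intro i h0 h1 hn'
    rw [hp0]
    simp only [coeff_add, coeff_sub, coeff_X_pow, coeff_C_mul, coeff_X, coeff_C, if_neg hn',
      if_neg (fun h : 1 = i => h1 h.symm), if_neg h0, mul_zero, sub_zero, add_zero, zero_sub,
      neg_zero]
  have main : ∀ Q : Ideal (𝓞 L), Q.IsPrime →
      Q.comap (algebraMap (𝓞 K) (𝓞 L)) = Ideal.span {γ} →
      (p0.map (algebraMap (𝓞 K) (𝓞 L))).IsEisensteinAt Q := by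
    intro Q hQ hQγ
    have hγQ : algebraMap (𝓞 K) (𝓞 L) γ ∈ Q := by
      have : γ ∈ Q.comap (algebraMap (𝓞 K) (𝓞 L)) := by
        rw [hQγ]; exact Ideal.mem_span_singleton_self _
      exact this
    have hfm : (p0.map (algebraMap (𝓞 K) (𝓞 L))).Monic := hmonic.map _
    refine ⟨?_, ?_, ?_⟩
    · rw [hfm.leadingCoeff]
      exact fun h => hQ.ne_top ((Ideal.eq_top_iff_one _).mpr h)
    · intro i hi
      rw [hmonic.natDegree_map, hdeg] at hi
      rw [coeff_map]
      rcases Decidable.eq_or_ne i 0 with rfl | h0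
      · rw [hc0]; exact hγQ
      rcases Decidable.eq_or_ne i 1 with rfl | h1
      · rw [hc1, map_neg, map_pow]
        exact Q.neg_mem (Q.pow_mem_of_mem hγQ _ (by omega))
      · rw [hck i h0 h1 (by omega), map_zero]
        exact Q.zero_mem
    · rw [coeff_map, hc0]
      exact gamma_not_mem_sq K L n hn γ hprime hcop ζ μ hζ hμ hL Q hQ hQγ
  refine ⟨main, ?_⟩
  haveI : (Ideal.span {γ} : Ideal (𝓞 K)).IsPrime := Ideal.isPrime_of_prime hprime
  haveI : (⊥ : Ideal (𝓞 L)).IsPrime := Ideal.bot_prime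
  obtain ⟨Q, -, hQp, hQc⟩ := Ideal.exists_ideal_over_prime_of_isIntegral_of_isPrime
    (Ideal.span {γ} : Ideal (𝓞 K)) (⊥ : Ideal (𝓞 L)) (by
      rw [← RingHom.ker_eq_comap_bot, RingOfIntegers.ker_algebraMap_eq_bot]; exact bot_le)
  have heis := main Q hQp hQc
  have hirr0 : Irreducible (p0.map (algebraMap (𝓞 K) (𝓞 L))) :=
    heis.irreducible hQp (hmonic.map _).isPrimitive
      (by rw [hmonic.natDegree_map, hdeg]; omega)
  have hirr1 := ((hmonic.map (algebraMap (𝓞 K) (𝓞 L))).irreducible_iff_irreducible_map_fraction_map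
    (K := L)).mp hirr0
  have hmapeq : (p0.map (algebraMap (𝓞 K) (𝓞 L))).map (algebraMap (𝓞 L) L)
      = X ^ n - C ((algebraMap K L (γ : K)) ^ (n - 1)) * X + C (algebraMap K L (γ : K)) := by
    rw [Polynomial.map_map, ← IsScalarTower.algebraMap_eq]
    have hγ : algebraMap (𝓞 K) L γ = algebraMap K L (γ : K) := by
      rw [IsScalarTower.algebraMap_apply (𝓞 K) K L]
    simp [hp0, Polynomial.map_add, Polynomial.map_sub, Polynomial.map_mul, Polynomial.map_pow,
      map_C, map_X, hγ]
  rwa [hmapeq] at hirr1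
end
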